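/- Let A₁,…,Aₙ be bounded operators on a complex Hilbert space and r₁,…,rₙ positive reals with ∑ᵢ 1/rᵢ = 1. Then |∑ᵢ Aᵢ|² ≤ ∑ᵢ rᵢ|Aᵢ|² in the Loewner order (i.e., the difference is a positive operator). -/

import Mathlib

open ContinuousLinearMap

theorem operator_bohr_inequality
    {E : Type*} [NormedAddCommGroup E] [InnerProductSpace ℂ E] [CompleteSpace E]
    {n : ℕ} (A : Fin n → (E →L[ℂ] E)) (r : Fin n → ℝ) (hr : ∀ i, 0 < r i)
    (hsum : ∑ i, 1 / r i = 1) :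
    ((∑ i, (r i : ℂ) • (adjoint (A i) * A i))
      - adjoint (∑ i, A i) * (∑ i, A i)).IsPositive := by
  refine ⟨?_, ?_⟩
  · refine IsSelfAdjoint.isSymmetric ?_
    simp only [IsSelfAdjoint, star_sub, star_sum, star_smul, star_mul,
      Complex.star_def, Complex.conj_ofReal, star_eq_adjoint, adjoint_adjoint, map_sum]
  · intro x
    have key : ∀ B : E →L[ℂ] E, RCLike.re (inner ℂ ((adjoint B * B) x) x : ℂ) = ‖B x‖ ^ 2 := by
      intro B
      rw [mul_apply_eq_comp, adjoint_inner_left]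
      exact inner_self_eq_norm_sq _
    have h2 : reApplyInnerSelf ((∑ i, (r i : ℂ) • (adjoint (A i) * A i))
        - adjoint (∑ i, A i) * (∑ i, A i)) x
        = (∑ i, r i * ‖A i x‖ ^ 2) - ‖(∑ i, A i) x‖ ^ 2 := by
      rw [reApplyInnerSelf_apply, sub_apply, inner_sub_left, map_sub, key]
      congr 1
      rw [ContinuousLinearMap.sum_apply, sum_inner, map_sum]
      refine Finset.sum_congr rfl fun i _ => ?_
      rw [smul_apply, inner_smul_left, Complex.conj_ofReal, ← key (A i)]
      simp [Complex.mul_re]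
    rw [h2, sub_nonneg]
    have h3 : ‖(∑ i, A i) x‖ ≤ ∑ i, ‖A i x‖ := by
      rw [ContinuousLinearMap.sum_apply]; exact norm_sum_le _ _
    have h4 : (∑ i, ‖A i x‖) ^ 2 ≤ ∑ i, r i * ‖A i x‖ ^ 2 := by
      have := Finset.sum_mul_sq_le_sq_mul_sq Finset.univ
        (fun i => 1 / Real.sqrt (r i)) (fun i => Real.sqrt (r i) * ‖A i x‖)
      have e1 : ∀ i : Fin n, 1 / Real.sqrt (r i) * (Real.sqrt (r i) * ‖A i x‖) = ‖A i x‖ := by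
        intro i
        rw [one_div, inv_mul_cancel_left₀ (Real.sqrt_pos.mpr (hr i)).ne']
      have e2 : ∀ i : Fin n, (1 / Real.sqrt (r i)) ^ 2 = 1 / r i := by
        intro i
        rw [div_pow, one_pow, Real.sq_sqrt (hr i).le]
      have e3 : ∀ i : Fin n, (Real.sqrt (r i) * ‖A i x‖) ^ 2 = r i * ‖A i x‖ ^ 2 := by
        intro i
        rw [mul_pow, Real.sq_sqrt (hr i).le]
      simp only [e1, e2, e3] at this
      rwa [hsum, one_mul] at this
    calc ‖(∑ i, A i) x‖ ^ 2 ≤ (∑ i, ‖A i x‖) ^ 2 := by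
          apply pow_le_pow_left₀ (norm_nonneg _) h3
      _ ≤ _ := h4
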